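/- With notation as in the C_i construction: the map C_{i-1} → C_i sending (w',S) to (w',S) if i ∉ S and to (w' r_α, S∖{i}) if i ∈ S (where r_α = q_i) is a well-defined surjection, and each fiber has one or two elements, according to: (1) if w' r_α > w', the fiber of (w',S) ∈ C_i is {(w',S)}; (2) if w' r_α < w' and w' ≰ v_{i-1}, the fiber is {(w' r_α, S∪{i})}; (3) if w' r_α < w' ≤ v_{i-1}, the fiber is {(w',S), (w' r_α, S∪{i})}. -/

import Mathlib

variable {B W : Type*} [DecidableEq B] [Group W] {M : CoxeterMatrix B} (cs : CoxeterSystem M W)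

/-- The Bruhat order on a Coxeter group, via the subword property:
`u ≤ v` iff every reduced word for `v` contains a subword that is a reduced word for `u`. -/
def BruhatLe (u v : W) : Prop :=
  ∀ Q : List B, cs.IsReduced Q → cs.wordProd Q = v →
    ∃ P : List B, P.Sublist Q ∧ cs.IsReduced P ∧ cs.wordProd P = u

/-- The Demazure product of a word in the simple reflections: multiply the letters in
order, omitting any letter that would decrease the length. -/
noncomputable def Dem (Q : List B) : W :=
  Q.foldl (fun w b => if cs.length w < cs.length (w * cs.simple b) then w * cs.simple b else w) 1

/-- The subword of `Q` obtained by deleting the letters at the positions in `F`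
(positions are `0`-indexed); this is the complementary subword `Q ∖ F`. -/
def dmask (Q : List B) (F : Finset ℕ) : List B :=
  ((Q.zipIdx.map Prod.swap).filter fun p => p.1 ∉ F).map Prod.snd

/-- The subword of `Q` consisting of the letters at the positions in `F` (in order). -/
def smask (Q : List B) (F : Finset ℕ) : List B :=
  ((Q.zipIdx.map Prod.swap).filter fun p => p.1 ∈ F).map Prod.snd

/-- `F` is a face of the subword complex `Δ(Q,w)`: `F` is a set of positions of `Q` such
that the complementary subword `Q ∖ F` contains a reduced word for `w`. -/
def IsFace (Q : List B) (w : W) (F : Finset ℕ) : Prop :=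
  F ⊆ Finset.range Q.length ∧
    ∃ P : List B, P.Sublist (dmask Q F) ∧ cs.IsReduced P ∧ cs.wordProd P = w

/-- `F` is a facet (maximal face) of the subword complex `Δ(Q,w)`. -/
def IsFacet (Q : List B) (w : W) (F : Finset ℕ) : Prop :=
  IsFace cs Q w F ∧ ∀ F' : Finset ℕ, IsFace cs Q w F' → F ⊆ F' → F' = F

/-- The set `C_i` of pairs `(w', S)` with `w' ≤ Dem(q_1, …, q_i)`,
`S ⊆ {i, …, ℓ(v) - 1}` (`0`-indexed positions), `ℓ(w') + |S| = ℓ(w)` and `w' ⋅ ∏ S = w`,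
where `∏ S` is the ordered product of the letters of `Q` at the positions in `S`. -/
def Cset (Q : List B) (w : W) (i : ℕ) : Set (W × Finset ℕ) :=
  {x | BruhatLe cs x.1 (Dem cs (Q.take i)) ∧ (∀ j ∈ x.2, i ≤ j ∧ j < Q.length) ∧
       cs.length x.1 + x.2.card = cs.length w ∧ x.1 * cs.wordProd (smask Q x.2) = w}

open List
set_option linter.unusedSectionVars false

namespace CoxAux

variable [DecidableEq W]

local prefix:100 "s" => cs.simple
local prefix:100 "π" => cs.wordProd
local prefix:100 "ℓ" => cs.length
local prefix:100 "ris" => cs.rightInvSeq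

theorem ris_cons (i : B) (ω : List B) :
    ris (i :: ω) = ((π ω)⁻¹ * s i * π ω) :: ris ω := rfl

theorem getD_ris_eq (ω : List B) (j : ℕ) (hj : j < ω.length) :
    (ris ω).getD j 1 = (π (ω.drop (j + 1)))⁻¹ * π (ω.drop j) := by
  rw [cs.getD_rightInvSeq, List.drop_eq_getElem_cons hj, cs.wordProd_cons]
  rw [List.getElem?_eq_getElem hj]
  simp [mul_assoc]

theorem ris_append (α β : List B) :
    ris (α ++ β) = (ris α).map (fun t => (π β)⁻¹ * t * π β) ++ ris β := by
  induction α with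
  | nil => simp
  | cons a α ih =>
      rw [cons_append, ris_cons, ris_cons, ih, map_cons, cons_append]
      congr 1
      rw [cs.wordProd_append]
      group

/-- The sign action of a generator on `W × ZMod 2`. -/
def esign (i : B) : Function.End (W × ZMod 2) :=
  fun x => (cs.simple i * x.1 * cs.simple i, x.2 + if x.1 = cs.simple i then 1 else 0)

theorem esign_prod (ω : List B) (t : W) (ε : ZMod 2) :
    ((ω.map (esign cs)).prod) (t, ε) =
      (π ω * t * (π ω)⁻¹, ε + ((ris ω).count t : ZMod 2)) := by
  induction ω generalizing t ε with
  | nil =>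
      show (t, ε) = _
      simp
  | cons i ω ih =>
      have hmul : ∀ (f g : Function.End (W × ZMod 2)) (x), (f * g) x = f (g x) := fun _ _ _ => rfl
      rw [map_cons, prod_cons, hmul, ih, esign]
      simp only
      rw [ris_cons, List.count_cons]
      simp only [beq_iff_eq]
      rw [Prod.mk.injEq]
      constructor
      · rw [cs.wordProd_cons]
        simp [mul_assoc, cs.inv_simple]
      · have hiff : ((π ω)⁻¹ * s i * π ω = t) ↔ (π ω * t * (π ω)⁻¹ = s i) := by
          constructor
          · rintro rfl; group
          · rintro h; rw [← h]; group
        by_cases h : π ω * t * (π ω)⁻¹ = s i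
        · rw [if_pos h, if_pos (hiff.mpr h)]
          push_cast
          ring
        · rw [if_neg h, if_neg (fun hh => h (hiff.mp hh))]
          push_cast
          ring

theorem alt_drop (i i' : B) : ∀ (n k : ℕ),
    (CoxeterSystem.alternatingWord i i' n).drop k = CoxeterSystem.alternatingWord i i' (n - k) := by
  intro n
  induction n generalizing i i' with
  | zero => intro k; simp [CoxeterSystem.alternatingWord]
  | succ m ih =>
      intro k
      cases k with
      | zero => simp
      | succ k =>
          rw [CoxeterSystem.alternatingWord_succ' i i' m, List.drop_succ_cons, ih i i' k]
          congr 1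
          omega

theorem inv_pow_simple_comm (i i' : B) (r : ℕ) :
    ((s i * s i')⁻¹) ^ r * s i' = s i' * (s i * s i') ^ r := by
  induction r with
  | zero => simp
  | succ r ih =>
      have h1 : (s i * s i')⁻¹ * s i' = s i' * (s i * s i') := by
        rw [mul_inv_rev, cs.inv_simple, cs.inv_simple]
        group
      calc ((s i * s i')⁻¹) ^ (r+1) * s i'
          = (s i * s i')⁻¹ ^ r * ((s i * s i')⁻¹ * s i') := by
            rw [pow_succ, mul_assoc]
        _ = (s i * s i')⁻¹ ^ r * s i' * (s i * s i') := by rw [h1, mul_assoc]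
        _ = s i' * (s i * s i') ^ (r + 1) := by rw [ih, mul_assoc, ← pow_succ]

theorem g_step (i i' : B) (k : ℕ) :
    (π (CoxeterSystem.alternatingWord i i' k))⁻¹ * π (CoxeterSystem.alternatingWord i i' (k+1)) =
      s i' * (s i * s i') ^ k := by
  rw [cs.prod_alternatingWord_eq_mul_pow, cs.prod_alternatingWord_eq_mul_pow]
  rcases Nat.even_or_odd k with he | ho
  · obtain ⟨r, rfl⟩ := he
    have h1 : ¬ Even (r + r + 1) := by simp [Nat.even_add_one]
    rw [if_pos (by exact ⟨r, rfl⟩), if_neg h1, one_mul]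
    rw [show (r + r) / 2 = r by omega, show (r + r + 1) / 2 = r by omega]
    rw [← inv_pow, ← mul_assoc, inv_pow_simple_comm, mul_assoc, ← pow_add]
  · obtain ⟨r, rfl⟩ := ho
    have h1 : Even (2 * r + 1 + 1) := by refine ⟨r + 1, by ring⟩
    rw [if_neg (by simp [Nat.even_add_one, parity_simps]), if_pos h1]
    rw [show (2 * r + 1) / 2 = r by omega, show (2 * r + 1 + 1) / 2 = r + 1 by omega]
    rw [mul_inv_rev, ← inv_pow, cs.inv_simple, mul_assoc, ← mul_assoc ((s i * s i')⁻¹ ^ r)]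
    rw [inv_pow_simple_comm, mul_assoc, one_mul, ← pow_add,
      show r + (r + 1) = 2 * r + 1 by omega]

theorem ris_alt_getD (i i' : B) (n j : ℕ) (hj : j < n) :
    (ris (CoxeterSystem.alternatingWord i i' n)).getD j 1 =
      s i' * (s i * s i') ^ (n - 1 - j) := by
  rw [getD_ris_eq cs _ j (by simpa using hj), alt_drop, alt_drop]
  rw [show n - j = (n - 1 - j) + 1 by omega, show n - (j+1) = n - 1 - j by omega]
  exact g_step cs i i' _

theorem ris_alt_split (i i' : B) (m : ℕ) (hm : (s i * s i') ^ m = 1) :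
    ris (CoxeterSystem.alternatingWord i i' (2 * m)) =
      ((List.range m).map (fun j => s i' * (s i * s i') ^ (m - 1 - j))) ++
      ((List.range m).map (fun j => s i' * (s i * s i') ^ (m - 1 - j))) := by
  apply List.ext_getElem
  · simp [two_mul]
  · intro j h1 h2
    have hj : j < 2 * m := by simpa using h1
    have hlen : (ris (CoxeterSystem.alternatingWord i i' (2*m))).length = 2 * m := by simp
    rw [← List.getD_eq_getElem _ 1 h1, ris_alt_getD cs i i' _ j hj]
    by_cases hjm : j < m
    · rw [List.getElem_append_left (by simpa using hjm)]
      simp only [List.getElem_map, List.getElem_range]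
      rw [show 2 * m - 1 - j = m + (m - 1 - j) by omega, pow_add, hm, one_mul]
    · rw [List.getElem_append_right (by simpa using hjm)]
      simp only [List.getElem_map, List.getElem_range]
      congr 2
      simp only [List.length_map, List.length_range]
      omega

theorem esign_liftable : M.IsLiftable (esign cs) := by
  intro i i'
  have key : ∀ m : ℕ, (esign cs i * esign cs i') ^ m =
      ((CoxeterSystem.alternatingWord i i' (2 * m)).map (esign cs)).prod := by
    intro m
    induction m with
    | zero => simp [CoxeterSystem.alternatingWord]
    | succ m ih =>
        have halt : CoxeterSystem.alternatingWord i i' (2 * (m + 1)) =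
            i :: i' :: CoxeterSystem.alternatingWord i i' (2 * m) := by
          rw [show 2 * (m + 1) = (2 * m + 1) + 1 by ring,
            CoxeterSystem.alternatingWord_succ' i i' (2 * m + 1),
            CoxeterSystem.alternatingWord_succ' i i' (2 * m)]
          simp [Nat.even_add_one]
        rw [halt, pow_succ', ih, map_cons, map_cons, prod_cons, prod_cons, mul_assoc]
  rcases Nat.eq_zero_or_pos (M i i') with h0 | _
  · rw [h0, pow_zero]
  funext x
  obtain ⟨t, ε⟩ := x
  rw [key (M i i'), esign_prod]
  have hπ : π (CoxeterSystem.alternatingWord i i' (2 * M i i')) = 1 := by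
    rw [cs.prod_alternatingWord_eq_mul_pow, if_pos ⟨M i i', by ring⟩,
      show 2 * M i i' / 2 = M i i' by omega, one_mul, cs.simple_mul_simple_pow]
  have hcount : (((ris (CoxeterSystem.alternatingWord i i' (2 * M i i'))).count t : ℕ) : ZMod 2)
      = 0 := by
    rw [ris_alt_split cs i i' (M i i') (cs.simple_mul_simple_pow i i'), List.count_append]
    push_cast
    have h2 : ∀ z : ZMod 2, z + z = 0 := by decide
    exact h2 _
  rw [hπ, hcount]
  show _ = (t, ε)
  simp

theorem count_invariance {ω ω' : List B} (h : π ω = π ω') (t : W) :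
    (((ris ω).count t : ℕ) : ZMod 2) = ((ris ω').count t : ZMod 2) := by
  have lift_eval : ∀ υ : List B, (cs.lift ⟨esign cs, esign_liftable cs⟩) (π υ) =
      (υ.map (esign cs)).prod := by
    intro υ
    rw [CoxeterSystem.wordProd, map_list_prod, List.map_map]
    congr 1
    apply List.map_congr_left
    intro b _
    simp only [Function.comp_apply]
    exact cs.lift_apply_simple (esign_liftable cs) b
  have h2 := congrArg (fun f : Function.End (W × ZMod 2) => f (t, 0))
    ((lift_eval ω).symm.trans ((congrArg _ h).trans (lift_eval ω')))
  rw [esign_prod, esign_prod, h, Prod.mk.injEq] at h2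
  simpa using h2.2


theorem count_ris_refl_aux : ∀ (μ : List B) (i : B),
    (((ris (μ ++ i :: μ.reverse)).count (π (μ ++ i :: μ.reverse)) : ℕ) : ZMod 2) = 1 := by
  intro μ
  induction μ with
  | nil => intro i; simp
  | cons b μ₀ ih =>
      intro i
      have hword : (b :: μ₀) ++ i :: (b :: μ₀).reverse
          = b :: ((μ₀ ++ i :: μ₀.reverse) ++ [b]) := by
        simp
      rw [hword]
      set τ₀ := μ₀ ++ i :: μ₀.reverse with hτ₀
      set t₀ := π τ₀ with ht₀def
      have hτform : t₀ = π μ₀ * s i * (π μ₀)⁻¹ := by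
        rw [ht₀def, hτ₀, cs.wordProd_append, cs.wordProd_cons, cs.wordProd_reverse, mul_assoc]
      have ht₀refl : cs.IsReflection t₀ := ⟨π μ₀, i, hτform⟩
      have ht₀inv : t₀⁻¹ = t₀ := ht₀refl.inv
      have ha : (s b)⁻¹ = s b := cs.inv_simple b
      have hπ : π (b :: (τ₀ ++ [b])) = s b * t₀ * s b := by
        rw [cs.wordProd_cons, cs.wordProd_append, cs.wordProd_singleton, ← ht₀def, mul_assoc]
      have hris : ris (b :: (τ₀ ++ [b]))
          = ((π (τ₀ ++ [b]))⁻¹ * s b * π (τ₀ ++ [b])) :: ((ris τ₀).map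
              (fun r => s b * r * s b) ++ [s b]) := by
        rw [ris_cons, ris_append]
        simp [cs.inv_simple]
      have hπτb : π (τ₀ ++ [b]) = t₀ * s b := by
        rw [cs.wordProd_append, cs.wordProd_singleton, ← ht₀def]
      have hcondhead : ((π (τ₀ ++ [b]))⁻¹ * s b * π (τ₀ ++ [b]) = s b * t₀ * s b) ↔ t₀ = s b := by
        rw [hπτb]
        have expand : (t₀ * s b)⁻¹ * s b * (t₀ * s b) = (s b * t₀) * (s b * (t₀ * s b)) := by
          rw [mul_inv_rev, ha, ht₀inv]
          group
        constructor
        · intro h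
          rw [expand] at h
          have h2 := mul_left_cancel h
          have h3 := mul_left_cancel (h2.trans (mul_one (s b)).symm)
          have h4 := eq_inv_of_mul_eq_one_left h3
          rwa [ha] at h4
        · intro h
          rw [expand, h]
          simp [cs.simple_mul_simple_self]
      have hcondlast : (s b = s b * t₀ * s b) ↔ t₀ = s b := by
        constructor
        · intro h
          have h2 : (s b * t₀) * s b = 1 * s b := by rw [one_mul, ← h]
          have h3 := mul_right_cancel h2
          have h4 := eq_inv_of_mul_eq_one_right h3
          rwa [ha] at h4
        · intro h
          rw [h]
          simp [cs.simple_mul_simple_self]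
      have hmapcount : ((ris τ₀).map (fun r => s b * r * s b)).count (s b * t₀ * s b)
          = (ris τ₀).count t₀ := by
        have hinj : Function.Injective (fun r : W => s b * r * s b) := by
          intro x y hxy
          simp only at hxy
          exact mul_left_cancel (mul_right_cancel hxy)
        exact List.count_map_of_injective _ _ hinj t₀
      rw [hπ, hris, List.count_cons, List.count_append, hmapcount]
      have hc1 : ([s b].count (s b * t₀ * s b)) = if t₀ = s b then 1 else 0 := by
        rcases Classical.em (t₀ = s b) with h | h
        · rw [if_pos h, ← hcondlast.mpr h]
          simp
        · rw [if_neg h, List.count_eq_zero]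
          intro hmem
          exact h (hcondlast.mp (List.mem_singleton.mp hmem).symm)
      have hc2 : (if ((π (τ₀ ++ [b]))⁻¹ * s b * π (τ₀ ++ [b]) == s b * t₀ * s b) = true
          then 1 else 0 : ℕ) = if t₀ = s b then 1 else 0 := by
        simp only [beq_iff_eq]
        rcases Classical.em (t₀ = s b) with h | h
        · rw [if_pos (hcondhead.mpr h), if_pos h]
        · rw [if_neg (fun hh => h (hcondhead.mp hh)), if_neg h]
      rcases Classical.em (t₀ = s b) with h | h
      · simp only [hc1, hc2, if_pos h]
        push_cast
        rw [ih i]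
        decide
      · simp only [hc1, hc2, if_neg h]
        push_cast
        rw [ih i]
        simp

theorem count_ris_reflection {t : W} (ht : cs.IsReflection t) (ω : List B) (hω : π ω = t) :
    (((ris ω).count t : ℕ) : ZMod 2) = 1 := by
  obtain ⟨u, i, rfl⟩ := ht
  obtain ⟨μ, hμ⟩ := cs.wordProd_surjective u
  have hπ : π (μ ++ i :: μ.reverse) = u * s i * u⁻¹ := by
    rw [cs.wordProd_append, cs.wordProd_cons, cs.wordProd_reverse, hμ, mul_assoc]
  have h1 := count_ris_refl_aux cs μ i
  rw [hπ] at h1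
  rw [count_invariance cs (hω.trans hπ.symm), h1]

theorem strong_exchange (ω : List B) {t : W} (ht : cs.IsReflection t)
    (hl : ℓ (π ω * t) < ℓ (π ω)) :
    ∃ j, ∃ _ : j < ω.length, π ω * t = π (ω.eraseIdx j) := by
  have htinv : t⁻¹ = t := ht.inv
  have htt : t * t = 1 := ht.mul_self
  have hmem : t ∈ ris ω := by
    obtain ⟨ρ, hρred, hρ⟩ := cs.exists_reduced_word' (π ω * t)
    obtain ⟨τ, hτred, hτ⟩ := cs.exists_reduced_word' t
    have hπρτ : π (ρ ++ τ) = π ω := by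
      rw [cs.wordProd_append, ← hτ, ← hρ, mul_assoc, htt, mul_one]
    have hci := count_invariance cs hπρτ.symm t
    have hsplit : ris (ρ ++ τ) = (ris ρ).map (fun r => t * r * t) ++ ris τ := by
      rw [ris_append, ← hτ]
      congr 1
      apply List.map_congr_left
      intro r _
      rw [htinv]
    have hcρ : (ris ρ).count t = 0 := by
      rw [List.count_eq_zero]
      intro hmem'
      have hri := cs.isRightInversion_of_mem_rightInvSeq hρred hmem'
      have h2 := hri.2
      rw [← hρ, mul_assoc, htt, mul_one] at h2
      omega
    have hcmap : ((ris ρ).map (fun r => t * r * t)).count t = 0 := by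
      have hinj : Function.Injective (fun r : W => t * r * t) := by
        intro x y hxy
        simp only at hxy
        exact mul_left_cancel (mul_right_cancel hxy)
      have h3 : ((ris ρ).map (fun r => t * r * t)).count (t * t * t) = (ris ρ).count t :=
        List.count_map_of_injective _ _ hinj t
      rw [htt, one_mul] at h3
      rw [h3, hcρ]
    have hcτ : (((ris τ).count t : ℕ) : ZMod 2) = 1 :=
      count_ris_reflection cs ht τ hτ.symm
    have hfin : (((ris ω).count t : ℕ) : ZMod 2) = 1 := by
      rw [hci, hsplit, List.count_append, hcmap]
      push_cast
      rw [hcτ, zero_add]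
    by_contra hnot
    rw [List.count_eq_zero_of_not_mem hnot] at hfin
    simp at hfin
  obtain ⟨j, hj, hget⟩ := List.mem_iff_getElem.mp hmem
  have hjlen : j < ω.length := by simpa using hj
  refine ⟨j, hjlen, ?_⟩
  have h4 := cs.wordProd_mul_getD_rightInvSeq ω j
  rwa [List.getD_eq_getElem _ 1 hj, hget] at h4
theorem exists_reduced_sublist_aux : ∀ (n : ℕ) (ω : List B), ω.length ≤ n →
    ∃ ω', ω' <+ ω ∧ cs.IsReduced ω' ∧ π ω' = π ω := by
  intro n
  induction n with
  | zero =>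
      intro ω hω
      rw [Nat.le_zero, List.length_eq_zero_iff] at hω
      exact ⟨ω, Sublist.refl ω, by simp [hω, CoxeterSystem.IsReduced], rfl⟩
  | succ n IH =>
      intro ω hω
      classical
      by_cases hred : cs.IsReduced ω
      · exact ⟨ω, Sublist.refl ω, hred, rfl⟩
      · have hex : ∃ m, ¬ cs.IsReduced (ω.take m) := ⟨ω.length, by simpa using hred⟩
        have hspec : ¬ cs.IsReduced (ω.take (Nat.find hex)) := Nat.find_spec hex
        have hne : Nat.find hex ≠ 0 := by
          intro h0
          apply hspec
          rw [h0]
          simp [CoxeterSystem.IsReduced]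
        obtain ⟨k, hk⟩ : ∃ k, Nat.find hex = k + 1 := ⟨Nat.find hex - 1, by omega⟩
        rw [hk] at hspec
        have hkred : cs.IsReduced (ω.take k) := by
          by_contra hkc
          exact Nat.find_min hex (by omega) hkc
        have hklen : k < ω.length := by
          by_contra hk
          push_neg at hk
          apply hspec
          rw [List.take_of_length_le (by omega)]
          rw [List.take_of_length_le hk] at hkred
          exact hkred
        have htake : ω.take (k+1) = ω.take k ++ [ω[k]] := by
          rw [List.take_succ, List.getElem?_eq_getElem hklen]
          rfl
        have hklen' : (ω.take k).length = k := by simp [hklen.le]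
        have hπtake : π (ω.take (k+1)) = π (ω.take k) * s (ω[k]) := by
          rw [htake, cs.wordProd_append, cs.wordProd_singleton]
        have hlenlt : ℓ (π (ω.take k) * s (ω[k])) < ℓ (π (ω.take k)) := by
          rcases cs.length_mul_simple (π (ω.take k)) (ω[k]) with h | h
          · exfalso
            apply hspec
            unfold CoxeterSystem.IsReduced
            rw [hπtake, h, hkred, hklen']
            simp
            omega
          · rw [← h]
            omega
        obtain ⟨j, hj, hexch⟩ := strong_exchange cs (ω.take k)
          (cs.isReflection_simple (ω[k])) hlenlt
        set ω₁ := (ω.take k).eraseIdx j ++ ω.drop (k+1) with hω₁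
        have hπω₁ : π ω₁ = π ω := by
          rw [hω₁, cs.wordProd_append, ← hexch]
          conv_rhs => rw [← List.take_append_drop (k+1) ω]
          rw [cs.wordProd_append, hπtake]
        have hsub : ω₁ <+ ω := by
          have h1 : (ω.take k).eraseIdx j <+ ω.take k := List.eraseIdx_sublist _ j
          have h2 : ω.drop (k+1) <+ ω.drop k := by
            rw [List.drop_eq_getElem_cons hklen]
            exact List.sublist_cons_self _ _
          have h3 : ω₁ <+ ω.take k ++ ω.drop k := List.Sublist.append h1 h2
          rwa [List.take_append_drop] at h3
        have hlen₁ : ω₁.length ≤ n := by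
          have h4 := List.length_eraseIdx_add_one (by omega : j < (ω.take k).length)
          have h5 : (ω.drop (k+1)).length = ω.length - (k+1) := by simp
          rw [hω₁, List.length_append]
          omega
        obtain ⟨ω', hsub', hred', hπ'⟩ := IH ω₁ hlen₁
        exact ⟨ω', hsub'.trans hsub, hred', hπ'.trans hπω₁⟩

theorem exists_reduced_sublist (ω : List B) :
    ∃ ω', ω' <+ ω ∧ cs.IsReduced ω' ∧ π ω' = π ω :=
  exists_reduced_sublist_aux cs ω.length ω le_rfl

/-- One step of the Bruhat order: multiply by a reflection on the right, increasing length. -/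
def BStep (x y : W) : Prop :=
  (∃ t, cs.IsReflection t ∧ y = x * t) ∧ cs.length x < cs.length y

/-- Chains of Bruhat steps. -/
def BChain : W → W → Prop := Relation.ReflTransGen (BStep cs)

theorem BChain.length_le {x y : W} (h : BChain cs x y) : ℓ x ≤ ℓ y := by
  induction h with
  | refl => exact le_rfl
  | tail _ hstep ih => exact ih.trans hstep.2.le

theorem BChain.eq_of_length_ge {x y : W} (h : BChain cs x y) (hl : ℓ y ≤ ℓ x) : x = y := by
  rcases (Relation.ReflTransGen.cases_tail h) with rfl | ⟨z, hxz, hzy⟩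
  · rfl
  · exfalso
    have := (BChain.length_le cs hxz).trans_lt hzy.2
    omega

theorem chain_subword_aux : ∀ (n : ℕ) (y : W), ℓ y ≤ n → ∀ x, BChain cs x y →
    ∀ R, cs.IsReduced R → π R = y →
    ∃ P, P <+ R ∧ cs.IsReduced P ∧ π P = x := by
  intro n
  induction n with
  | zero =>
      intro y hy x hchain R hred hπ
      have hx := BChain.eq_of_length_ge cs hchain (by omega)
      exact ⟨R, Sublist.refl R, hred, hx ▸ hπ⟩
  | succ n IH =>
      intro y hy x hchain R hred hπ
      rcases Relation.ReflTransGen.cases_tail hchain with rfl | ⟨z, hxz, hzy⟩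
      · exact ⟨R, Sublist.refl R, hred, hπ⟩
      · obtain ⟨⟨t, ht, rfl⟩, hlen⟩ := hzy
        have hyt : ℓ (π R * t) < ℓ (π R) := by
          rw [hπ, mul_assoc, ht.mul_self, mul_one]
          exact hlen
        obtain ⟨j, hj, hexch⟩ := strong_exchange cs R ht hyt
        have hz : π (R.eraseIdx j) = z := by
          rw [← hexch, hπ, mul_assoc, ht.mul_self, mul_one]
        obtain ⟨R₁, hsub₁, hred₁, hπ₁⟩ := exists_reduced_sublist cs (R.eraseIdx j)
        have hπR₁ : π R₁ = z := hπ₁.trans hz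
        have hlz : ℓ z ≤ n := by
          have h1 : ℓ (z * t) ≤ n + 1 := hπ ▸ hy
          omega
        obtain ⟨P, hPsub, hPred, hPπ⟩ := IH z hlz x hxz R₁ hred₁ hπR₁
        exact ⟨P, (hPsub.trans hsub₁).trans (List.eraseIdx_sublist R j), hPred, hPπ⟩

theorem chain_subword {x y : W} (h : BChain cs x y) {R : List B} (hred : cs.IsReduced R)
    (hπ : π R = y) : ∃ P, P <+ R ∧ cs.IsReduced P ∧ π P = x :=
  chain_subword_aux cs (ℓ y) y le_rfl x h R hred hπ

theorem chain_mul_simple {x y : W} (h : BChain cs x y) (i : B) :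
    BChain cs (x * s i) y ∨ BChain cs (x * s i) (y * s i) := by
  induction h with
  | refl => exact Or.inr Relation.ReflTransGen.refl
  | @tail z y hxz hzy ih =>
      obtain ⟨⟨t, ht, rfl⟩, hlen⟩ := hzy
      rcases ih with h1 | h2
      · exact Or.inl (h1.tail ⟨⟨t, ht, rfl⟩, hlen⟩)
      · have hconj : cs.IsReflection (s i * t * s i) := by
          have := ht.conj (s i)
          rwa [cs.inv_simple] at this
        have hne : ℓ (z * t * s i) ≠ ℓ (z * s i) := by
          intro heq
          apply hconj.length_mul_left_ne (z * s i)
          rw [show z * s i * (s i * t * s i) = z * t * s i by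
            simp [mul_assoc, cs.simple_mul_simple_cancel_left]]
          exact heq
        rcases lt_or_gt_of_ne hne with hlt | hgt
        · -- ℓ (z*t*s i) < ℓ (z*s i) : diamond, z * s i = z * t
          have hzs_le : ℓ (z * s i) ≤ ℓ z + 1 := by
            rcases cs.length_mul_simple z i with h | h <;> omega
          have hts_ge : ℓ z ≤ ℓ (z * t * s i) := by
            rcases cs.length_mul_simple (z * t) i with h | h <;> omega
          have h5 : ℓ (z * t * s i) = ℓ z ∧ ℓ (z * s i) = ℓ z + 1 ∧ ℓ (z * t) = ℓ z + 1 := by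
            rcases cs.length_mul_simple (z * t) i with h | h <;> omega
          obtain ⟨he1, he2, he3⟩ := h5
          -- construct a reduced word for z * t ending in i
          obtain ⟨ω₀, hω₀red, hω₀⟩ := cs.exists_reduced_word' (z * t * s i)
          have hω₀len : ω₀.length = ℓ z := by
            rw [CoxeterSystem.IsReduced] at hω₀red
            rw [← hω₀red, ← hω₀, he1]
          have hπω : π (ω₀ ++ [i]) = z * t := by
            rw [cs.wordProd_append, cs.wordProd_singleton, ← hω₀, mul_assoc,
              cs.simple_mul_simple_self, mul_one]
          have hωred : cs.IsReduced (ω₀ ++ [i]) := by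
            unfold CoxeterSystem.IsReduced
            rw [hπω, List.length_append, hω₀len, he3]
            simp
          have hlt2 : ℓ (π (ω₀ ++ [i]) * t) < ℓ (π (ω₀ ++ [i])) := by
            rw [hπω, mul_assoc, ht.mul_self, mul_one, he3]
            omega
          obtain ⟨j, hj, hexch⟩ := strong_exchange cs (ω₀ ++ [i]) ht hlt2
          rw [hπω, mul_assoc, ht.mul_self, mul_one] at hexch
          by_cases hjlast : j = ω₀.length
          · -- erased the last letter: z = π ω₀ = z * t * s i, so z * s i = z * t
            have herase : (ω₀ ++ [i]).eraseIdx j = ω₀ := by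
              rw [hjlast, List.eraseIdx_eq_take_drop_succ, List.take_left]
              rw [List.drop_eq_nil_of_le (by simp)]
              simp
            rw [herase, ← hω₀] at hexch
            have hzsi : z * s i = z * t := by
              nth_rewrite 1 [hexch]
              rw [mul_assoc (z * t), cs.simple_mul_simple_self, mul_one]
            exact Or.inl (hzsi ▸ h2)
          · have hjlt : j < ω₀.length := by
              have := hj
              simp only [List.length_append, List.length_singleton] at this
              omega
            have herase : (ω₀ ++ [i]).eraseIdx j = ω₀.eraseIdx j ++ [i] := by
              rw [List.eraseIdx_append_of_lt_length hjlt]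
            rw [herase] at hexch
            exfalso
            have hzsi : z * s i = π (ω₀.eraseIdx j) := by
              rw [hexch, cs.wordProd_append, cs.wordProd_singleton, mul_assoc,
                cs.simple_mul_simple_self, mul_one]
            have hlb : ℓ (z * s i) ≤ (ω₀.eraseIdx j).length := by
              rw [hzsi]
              exact cs.length_wordProd_le _
            have := List.length_eraseIdx_add_one hjlt
            omega
        · -- ℓ (z*s i) < ℓ (z*t*s i) : make a step from z * s i to z * t * s i
          refine Or.inr (h2.tail ⟨⟨s i * t * s i, hconj, ?_⟩, hgt⟩)
          simp [mul_assoc, cs.simple_mul_simple_cancel_left]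

theorem subword_chain : ∀ (R : List B), cs.IsReduced R → ∀ P, P <+ R → cs.IsReduced P →
    BChain cs (π P) (π R) := by
  intro R
  induction R using List.reverseRecOn with
  | nil =>
      intro _ P hP _
      rw [List.sublist_nil.mp hP]
      exact Relation.ReflTransGen.refl
  | append_singleton R₀ c ih =>
      intro hred P hP hPred
      have hR₀red : cs.IsReduced R₀ := by
        have := CoxeterSystem.IsReduced.take hred R₀.length
        rwa [List.take_left] at this
      have hstep : BStep cs (π R₀) (π (R₀ ++ [c])) := by
        refine ⟨⟨s c, cs.isReflection_simple c, by rw [cs.wordProd_append, cs.wordProd_singleton]⟩, ?_⟩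
        rw [CoxeterSystem.IsReduced] at hred hR₀red
        rw [hred, hR₀red]
        simp
      obtain ⟨P₁, P₂, rfl, hP₁, hP₂⟩ := List.sublist_append_iff.mp hP
      rcases List.sublist_singleton.mp hP₂ with rfl | rfl
      · rw [List.append_nil] at hPred ⊢
        exact (ih hR₀red P₁ hP₁ hPred).tail hstep
      · have hP₁red : cs.IsReduced P₁ := by
          have := CoxeterSystem.IsReduced.take hPred P₁.length
          rwa [List.take_left] at this
        have hchain := ih hR₀red P₁ hP₁ hP₁red
        rcases chain_mul_simple cs hchain c with h1 | h2
        · have h3 := h1.tail hstep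
          rw [show π (P₁ ++ [c]) = π P₁ * s c by
            rw [cs.wordProd_append, cs.wordProd_singleton]]
          exact h3
        · rw [cs.wordProd_append, cs.wordProd_singleton]
          rw [show π R₀ * s c = π (R₀ ++ [c]) by rw [cs.wordProd_append, cs.wordProd_singleton]] at h2
          exact h2

theorem bruhatLe_of_chain {u v : W} (h : BChain cs u v) : BruhatLe cs u v := by
  intro R hR hπ
  exact chain_subword cs h hR hπ

theorem bruhatLe_of_sublist {P R : List B} (hsub : P <+ R) (hPred : cs.IsReduced P)
    (hRred : cs.IsReduced R) : BruhatLe cs (cs.wordProd P) (cs.wordProd R) :=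
  bruhatLe_of_chain cs (subword_chain cs R hRred P hsub hPred)

end CoxAux

namespace CoxAux2

theorem dem_eq_wordProd {Q : List B} (h : cs.IsReduced Q) : Dem cs Q = cs.wordProd Q := by
  induction Q using List.reverseRecOn with
  | nil => simp [Dem]
  | append_singleton Q b ih =>
      have hQ : cs.IsReduced Q := by
        have h2 := CoxeterSystem.IsReduced.take h Q.length
        rwa [List.take_left] at h2
      have hd : Dem cs (Q ++ [b]) =
          if cs.length (Dem cs Q) < cs.length (Dem cs Q * cs.simple b)
          then Dem cs Q * cs.simple b else Dem cs Q := by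
        unfold Dem
        rw [List.foldl_append]
        rfl
      have h1 : cs.wordProd Q * cs.simple b = cs.wordProd (Q ++ [b]) := by
        rw [cs.wordProd_append, cs.wordProd_singleton]
      have h2 : cs.length (cs.wordProd (Q ++ [b])) = Q.length + 1 := by
        have h3 := h
        rw [CoxeterSystem.IsReduced] at h3
        simpa using h3
      have h3 : cs.length (cs.wordProd Q) = Q.length := hQ
      rw [hd, ih hQ, if_pos (by rw [h1, h2, h3]; omega), h1]

theorem filter_enum_length_le (Q : List B) (F : Finset ℕ) (q : ℕ × B → Bool)
    (hq : ∀ p : ℕ × B, q p = true → p.1 ∈ F) :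
    ((Q.zipIdx.map Prod.swap).filter q).length ≤ F.card := by
  classical
  have hsub : ((Q.zipIdx.map Prod.swap).filter q).map Prod.fst <+ (Q.zipIdx.map Prod.swap).map Prod.fst :=
    ((Q.zipIdx.map Prod.swap).filter_sublist).map Prod.fst
  rw [List.map_map, show Prod.fst ∘ Prod.swap = (Prod.snd : B × ℕ → ℕ) from rfl,
    List.zipIdx_map_snd] at hsub
  have hnodup : (((Q.zipIdx.map Prod.swap).filter q).map Prod.fst).Nodup :=
    (List.nodup_range' (s := 0) (n := Q.length)).sublist hsub
  have hmem : ∀ x ∈ ((Q.zipIdx.map Prod.swap).filter q).map Prod.fst, x ∈ F := by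
    intro x hx
    obtain ⟨pr, hpr, rfl⟩ := List.mem_map.mp hx
    exact hq pr (List.of_mem_filter hpr)
  have hlen : (((Q.zipIdx.map Prod.swap).filter q).map Prod.fst).length ≤ F.card := by
    rw [← List.toFinset_card_of_nodup hnodup]
    apply Finset.card_le_card
    intro x hx
    exact hmem x (List.mem_toFinset.mp hx)
  simpa using hlen

theorem smask_length_le (Q : List B) (F : Finset ℕ) : (smask Q F).length ≤ F.card := by
  unfold smask
  rw [List.length_map]
  apply filter_enum_length_le
  intro pr hpr
  simpa using hpr

theorem smask_insert (Q₁ Q₂ : List B) (c : B) (S : Finset ℕ) (hS : ∀ j ∈ S, Q₁.length < j) :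
    smask (Q₁ ++ c :: Q₂) (insert Q₁.length S) = c :: smask (Q₁ ++ c :: Q₂) S := by
  have hpS : Q₁.length ∉ S := fun h => lt_irrefl _ (hS _ h)
  unfold smask
  rw [List.zipIdx_append, Nat.zero_add, List.zipIdx_cons, List.map_append, List.map_cons,
    List.filter_append, List.filter_append]
  have hnil : ∀ (F : Finset ℕ), (∀ j ∈ F, Q₁.length ≤ j) →
      (Q₁.zipIdx.map Prod.swap).filter (fun pr => decide (pr.1 ∈ F)) = [] := by
    intro F hF
    rw [List.filter_eq_nil_iff]
    intro pr hpr
    simp only [decide_eq_true_eq]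
    intro hmem
    have h1 : pr.1 < Q₁.length := by
      obtain ⟨q, hq, rfl⟩ := List.mem_map.mp hpr
      simpa using List.snd_lt_of_mem_zipIdx hq
    have h2 := hF _ hmem
    omega
  rw [hnil (insert Q₁.length S) (fun j hj => by
    rcases Finset.mem_insert.mp hj with rfl | h
    · exact le_rfl
    · exact (hS j h).le)]
  rw [hnil S (fun j hj => (hS j hj).le)]
  rw [List.filter_cons, List.filter_cons]
  rw [if_pos (by simp), if_neg (by simp [hpS])]
  have hcongr : ((Q₂.zipIdx (Q₁.length + 1)).map Prod.swap).filter
        (fun pr => decide (pr.1 ∈ insert Q₁.length S))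
      = ((Q₂.zipIdx (Q₁.length + 1)).map Prod.swap).filter (fun pr => decide (pr.1 ∈ S)) := by
    apply List.filter_congr
    intro pr hpr
    have h1 : Q₁.length + 1 ≤ pr.1 := by
      obtain ⟨q, hq, rfl⟩ := List.mem_map.mp hpr
      exact List.le_snd_of_mem_zipIdx hq
    simp only [decide_eq_decide]
    rw [Finset.mem_insert]
    constructor
    · rintro (h | h)
      · omega
      · exact h
    · exact Or.inr
  rw [hcongr]
  simp

end CoxAux2


/-- The map `C_{i-1} → C_i` (here `i - 1 = Q₁.length` is the `0`-indexed position of the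
letter `a` in `Q = Q₁ ++ a :: Q₂`) sending `(w', S) ↦ (w', S)` if `i - 1 ∉ S` and
`(w', S) ↦ (w' sₐ, S ∖ {i-1})` if `i - 1 ∈ S` is a well-defined surjection, whose fibers are
as described in cases (1), (2), (3). -/
theorem cset_surjection (Q₁ Q₂ : List B) (a : B) (v w : W)
    (hred : cs.IsReduced (Q₁ ++ a :: Q₂)) (hv : cs.wordProd (Q₁ ++ a :: Q₂) = v)
    (hw : BruhatLe cs w v) :
    let Q := Q₁ ++ a :: Q₂
    let p := Q₁.length
    let φ : W × Finset ℕ → W × Finset ℕ :=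
      fun x => if p ∈ x.2 then (x.1 * cs.simple a, x.2.erase p) else x
    -- well-defined
    (∀ x ∈ Cset cs Q w p, φ x ∈ Cset cs Q w (p + 1)) ∧
    -- surjective
    (∀ y ∈ Cset cs Q w (p + 1), ∃ x ∈ Cset cs Q w p, φ x = y) ∧
    -- fibers
    (∀ y ∈ Cset cs Q w (p + 1),
      -- case (1): `y.1 * sₐ > y.1`
      (cs.length y.1 < cs.length (y.1 * cs.simple a) →
        ∀ x, (x ∈ Cset cs Q w p ∧ φ x = y) ↔ x = y) ∧
      -- case (2): `y.1 * sₐ < y.1` and `y.1 ≰ v_{i-1}`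
      (cs.length (y.1 * cs.simple a) < cs.length y.1 →
        ¬ BruhatLe cs y.1 (Dem cs Q₁) →
        ∀ x, (x ∈ Cset cs Q w p ∧ φ x = y) ↔
          x = (y.1 * cs.simple a, insert p y.2)) ∧
      -- case (3): `y.1 * sₐ < y.1 ≤ v_{i-1}`
      (cs.length (y.1 * cs.simple a) < cs.length y.1 →
        BruhatLe cs y.1 (Dem cs Q₁) →
        ∀ x, (x ∈ Cset cs Q w p ∧ φ x = y) ↔
          (x = y ∨ x = (y.1 * cs.simple a, insert p y.2)))) := by
  classical
  intro Q p φ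
  have hQdef : Q = Q₁ ++ a :: Q₂ := rfl
  have hφdef : ∀ x : W × Finset ℕ,
      φ x = if p ∈ x.2 then (x.1 * cs.simple a, x.2.erase p) else x := fun _ => rfl
  have hQred : cs.IsReduced Q := hred
  have hQ1red : cs.IsReduced Q₁ := by
    have h2 := CoxeterSystem.IsReduced.take hred Q₁.length
    rwa [List.take_left] at h2
  have hQtake : Q.take p = Q₁ := List.take_left
  have hQtake1 : Q.take (p + 1) = Q₁ ++ [a] := by
    rw [hQdef, List.take_append,
      List.take_of_length_le (by simp [p]), show Q₁.length + 1 - Q₁.length = 1 by omega]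
    rfl
  have hQ1ared : cs.IsReduced (Q₁ ++ [a]) := by
    rw [← hQtake1]; exact CoxeterSystem.IsReduced.take hQred (p+1)
  have hDem0 : Dem cs (Q.take p) = cs.wordProd Q₁ := by
    rw [hQtake]; exact CoxAux2.dem_eq_wordProd cs hQ1red
  have hDemQ1 : Dem cs Q₁ = cs.wordProd Q₁ := CoxAux2.dem_eq_wordProd cs hQ1red
  have hDem1 : Dem cs (Q.take (p+1)) = cs.wordProd (Q₁ ++ [a]) := by
    rw [hQtake1]; exact CoxAux2.dem_eq_wordProd cs hQ1ared
  have hpQ : p < Q.length := by rw [hQdef]; simp [p]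
  have hsmins : ∀ S : Finset ℕ, (∀ j ∈ S, p < j) →
      smask Q (insert p S) = a :: smask Q S := by
    intro S hS
    rw [hQdef]
    exact CoxAux2.smask_insert Q₁ Q₂ a S hS
  have K2 : ∀ u : W, BruhatLe cs u (cs.wordProd Q₁) →
      BruhatLe cs u (cs.wordProd (Q₁ ++ [a])) := by
    intro u hu
    obtain ⟨P, h1, h2, h3⟩ := hu Q₁ hQ1red rfl
    exact h3 ▸ CoxAux.bruhatLe_of_sublist cs
      (h1.trans (List.sublist_append_left Q₁ [a])) h2 hQ1ared
  have K3 : ∀ u : W, BruhatLe cs u (cs.wordProd Q₁) →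
      cs.length (u * cs.simple a) = cs.length u + 1 →
      BruhatLe cs (u * cs.simple a) (cs.wordProd (Q₁ ++ [a])) := by
    intro u hu hl
    obtain ⟨P, h1, h2, h3⟩ := hu Q₁ hQ1red rfl
    have hπ : cs.wordProd (P ++ [a]) = u * cs.simple a := by
      rw [cs.wordProd_append, cs.wordProd_singleton, h3]
    have hlu : cs.length u = P.length := by rw [← h3]; exact h2
    have hredP : cs.IsReduced (P ++ [a]) := by
      rw [CoxeterSystem.IsReduced, hπ, hl, hlu]
      simp
    exact hπ ▸ CoxAux.bruhatLe_of_sublist cs (h1.append (List.Sublist.refl [a])) hredP hQ1ared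
  have K4 : ∀ u : W, BruhatLe cs u (cs.wordProd (Q₁ ++ [a])) →
      cs.length u < cs.length (u * cs.simple a) → BruhatLe cs u (cs.wordProd Q₁) := by
    intro u hu hl
    obtain ⟨P, h1, h2, h3⟩ := hu (Q₁ ++ [a]) hQ1ared rfl
    obtain ⟨P₁, P₂, rfl, hP₁, hP₂⟩ := List.sublist_append_iff.mp h1
    rcases List.sublist_singleton.mp hP₂ with rfl | rfl
    · rw [List.append_nil] at h2 h3
      exact h3 ▸ CoxAux.bruhatLe_of_sublist cs hP₁ h2 hQ1red
    · exfalso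
      have hπP : cs.wordProd P₁ * cs.simple a = u := by
        rw [← h3, cs.wordProd_append, cs.wordProd_singleton]
      have h5 : u * cs.simple a = cs.wordProd P₁ := by
        rw [← hπP, mul_assoc, cs.simple_mul_simple_self, mul_one]
      have h6 : cs.length (cs.wordProd P₁) ≤ P₁.length := cs.length_wordProd_le P₁
      have h7 : cs.length u = P₁.length + 1 := by
        rw [← h3]
        have h8 := h2
        rw [CoxeterSystem.IsReduced] at h8
        simpa using h8
      rw [h5] at hl
      omega
  have K5 : ∀ u : W, BruhatLe cs u (cs.wordProd (Q₁ ++ [a])) →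
      cs.length (u * cs.simple a) < cs.length u →
      BruhatLe cs (u * cs.simple a) (cs.wordProd Q₁) := by
    intro u hu hl
    obtain ⟨P, h1, h2, h3⟩ := hu (Q₁ ++ [a]) hQ1ared rfl
    obtain ⟨P₁, P₂, rfl, hP₁, hP₂⟩ := List.sublist_append_iff.mp h1
    rcases List.sublist_singleton.mp hP₂ with rfl | rfl
    · rw [List.append_nil] at h2 h3
      have hl2 : cs.length (cs.wordProd P₁ * cs.simple a) < cs.length (cs.wordProd P₁) := by
        rw [h3]; exact hl
      obtain ⟨j, hj, hexch⟩ := CoxAux.strong_exchange cs P₁ (cs.isReflection_simple a) hl2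
      have hP₁len : cs.length (cs.wordProd P₁) = P₁.length := h2
      have hlenE := List.length_eraseIdx_add_one hj
      have hredE : cs.IsReduced (P₁.eraseIdx j) := by
        rw [CoxeterSystem.IsReduced, ← hexch]
        rcases cs.length_mul_simple (cs.wordProd P₁) a with hc | hc <;> omega
      have h4 : u * cs.simple a = cs.wordProd (P₁.eraseIdx j) := by rw [← h3]; exact hexch
      exact h4 ▸ CoxAux.bruhatLe_of_sublist cs
        ((List.eraseIdx_sublist P₁ j).trans hP₁) hredE hQ1red
    · have hπP : cs.wordProd P₁ * cs.simple a = u := by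
        rw [← h3, cs.wordProd_append, cs.wordProd_singleton]
      have h5 : u * cs.simple a = cs.wordProd P₁ := by
        rw [← hπP, mul_assoc, cs.simple_mul_simple_self, mul_one]
      have hP₁red : cs.IsReduced P₁ := by
        have h6 := CoxeterSystem.IsReduced.take h2 P₁.length
        rwa [List.take_left] at h6
      exact h5 ▸ CoxAux.bruhatLe_of_sublist cs hP₁ hP₁red hQ1red
  have hmem : ∀ (i : ℕ) (x : W × Finset ℕ), x ∈ Cset cs Q w i ↔
      (BruhatLe cs x.1 (Dem cs (Q.take i)) ∧ (∀ j ∈ x.2, i ≤ j ∧ j < Q.length) ∧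
       cs.length x.1 + x.2.card = cs.length w ∧ x.1 * cs.wordProd (smask Q x.2) = w) :=
    fun _ _ => Iff.rfl
  have K1 : ∀ x : W × Finset ℕ, x ∈ Cset cs Q w p → p ∈ x.2 →
      smask Q x.2 = a :: smask Q (x.2.erase p) ∧
      cs.length (x.1 * cs.simple a) = cs.length x.1 + 1 := by
    intro x hx hp
    obtain ⟨hx1, hx2, hx3, hx4⟩ := (hmem p x).mp hx
    have herS : ∀ j ∈ x.2.erase p, p < j := by
      intro j hj
      have h1 := Finset.mem_of_mem_erase hj
      have h2 := Finset.ne_of_mem_erase hj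
      have h3 := (hx2 j h1).1
      omega
    have hsm : smask Q x.2 = a :: smask Q (x.2.erase p) := by
      conv_lhs => rw [← Finset.insert_erase hp]
      exact hsmins _ herS
    refine ⟨hsm, ?_⟩
    have hle := CoxAux2.smask_length_le Q (x.2.erase p)
    have hcarde : (x.2.erase p).card = x.2.card - 1 := Finset.card_erase_of_mem hp
    have hcardpos : 1 ≤ x.2.card := Finset.card_pos.mpr ⟨p, hp⟩
    have hwle : cs.length w ≤ cs.length (x.1 * cs.simple a) + (smask Q (x.2.erase p)).length := by
      have h6 : w = x.1 * cs.simple a * cs.wordProd (smask Q (x.2.erase p)) := by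
        rw [← hx4, hsm, cs.wordProd_cons, mul_assoc]
      rw [h6]
      calc cs.length (x.1 * cs.simple a * cs.wordProd (smask Q (x.2.erase p)))
          ≤ cs.length (x.1 * cs.simple a) + cs.length (cs.wordProd (smask Q (x.2.erase p))) :=
            cs.length_mul_le _ _
        _ ≤ _ := by
            have h7 := cs.length_wordProd_le (smask Q (x.2.erase p))
            omega
    rcases cs.length_mul_simple x.1 a with hc | hc
    · exact hc
    · omega
  have Mxp : ∀ y : W × Finset ℕ, y ∈ Cset cs Q w (p+1) →
      cs.length (y.1 * cs.simple a) + 1 = cs.length y.1 →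
      ((y.1 * cs.simple a, insert p y.2) ∈ Cset cs Q w p ∧
        φ (y.1 * cs.simple a, insert p y.2) = y) := by
    intro y hy hc
    obtain ⟨hy1, hy2, hy3, hy4⟩ := (hmem (p+1) y).mp hy
    have hpy2 : p ∉ y.2 := fun h => by have := (hy2 p h).1; omega
    have hygt : ∀ j ∈ y.2, p < j := fun j hj => by have := (hy2 j hj).1; omega
    have hsm := hsmins y.2 hygt
    constructor
    · refine (hmem p _).mpr ⟨?_, ?_, ?_, ?_⟩
      · dsimp only
        rw [hDem0]
        apply K5 y.1 ?_ (by omega)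
        rw [← hDem1]; exact hy1
      · intro j hj
        dsimp only at hj
        rcases Finset.mem_insert.mp hj with rfl | hj'
        · exact ⟨le_rfl, hpQ⟩
        · have := hy2 j hj'
          exact ⟨by omega, this.2⟩
      · dsimp only
        rw [Finset.card_insert_of_notMem hpy2]
        omega
      · dsimp only
        rw [hsm, cs.wordProd_cons, mul_assoc, cs.simple_mul_simple_cancel_left]
        exact hy4
    · rw [hφdef, if_pos (Finset.mem_insert_self p y.2)]
      dsimp only
      rw [Finset.erase_insert hpy2, mul_assoc, cs.simple_mul_simple_self, mul_one]
  have Mup : ∀ y : W × Finset ℕ, y ∈ Cset cs Q w (p+1) →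
      cs.length y.1 < cs.length (y.1 * cs.simple a) →
      (y ∈ Cset cs Q w p ∧ φ y = y) := by
    intro y hy hc
    obtain ⟨hy1, hy2, hy3, hy4⟩ := (hmem (p+1) y).mp hy
    have hpy2 : p ∉ y.2 := fun h => by have := (hy2 p h).1; omega
    refine ⟨(hmem p y).mpr ⟨?_, ?_, hy3, hy4⟩, ?_⟩
    · rw [hDem0]
      apply K4 y.1 ?_ hc
      rw [← hDem1]; exact hy1
    · intro j hj
      have := hy2 j hj
      exact ⟨by omega, this.2⟩
    · rw [hφdef, if_neg hpy2]
  have FA : ∀ y : W × Finset ℕ, y ∈ Cset cs Q w (p+1) → ∀ x, x ∈ Cset cs Q w p → φ x = y →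
      (x = y ∨ (x = (y.1 * cs.simple a, insert p y.2) ∧
        cs.length (y.1 * cs.simple a) + 1 = cs.length y.1)) := by
    intro y hy x hx hxy
    by_cases hpx : p ∈ x.2
    · right
      rw [hφdef, if_pos hpx] at hxy
      obtain ⟨hsm, hK1⟩ := K1 x hx hpx
      have h1 : x.1 * cs.simple a = y.1 := congrArg Prod.fst hxy
      have h2 : x.2.erase p = y.2 := congrArg Prod.snd hxy
      have hx1 : y.1 * cs.simple a = x.1 := by
        rw [← h1, mul_assoc, cs.simple_mul_simple_self, mul_one]
      have hx2' : x.2 = insert p y.2 := by rw [← h2, Finset.insert_erase hpx]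
      constructor
      · calc x = (x.1, x.2) := rfl
          _ = (y.1 * cs.simple a, insert p y.2) := by rw [hx1, hx2']
      · rw [hx1, ← h1, hK1]
    · left
      rw [hφdef, if_neg hpx] at hxy
      exact hxy
  refine ⟨?_, ?_, ?_⟩
  · -- well-definedness
    intro x hx
    obtain ⟨hx1, hx2, hx3, hx4⟩ := (hmem p x).mp hx
    by_cases hpx : p ∈ x.2
    · obtain ⟨hsm, hK1⟩ := K1 x hx hpx
      rw [hφdef, if_pos hpx]
      have herS : ∀ j ∈ x.2.erase p, p < j := by
        intro j hj
        have h1 := Finset.mem_of_mem_erase hj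
        have h2 := Finset.ne_of_mem_erase hj
        have h3 := (hx2 j h1).1
        omega
      refine (hmem _ _).mpr ⟨?_, ?_, ?_, ?_⟩
      · dsimp only
        rw [hDem1]
        apply K3 x.1 ?_ hK1
        rw [← hDem0]; exact hx1
      · intro j hj
        dsimp only at hj
        have h1 := herS j hj
        have h2 := (hx2 j (Finset.mem_of_mem_erase hj)).2
        exact ⟨by omega, h2⟩
      · dsimp only
        rw [Finset.card_erase_of_mem hpx]
        have hcardpos : 1 ≤ x.2.card := Finset.card_pos.mpr ⟨p, hpx⟩
        omega
      · dsimp only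
        rw [← hx4, hsm, cs.wordProd_cons, mul_assoc]
    · rw [hφdef, if_neg hpx]
      refine (hmem _ _).mpr ⟨?_, ?_, hx3, hx4⟩
      · rw [hDem1]
        apply K2 x.1
        rw [← hDem0]; exact hx1
      · intro j hj
        have h1 := hx2 j hj
        have h2 : j ≠ p := fun h => hpx (h ▸ hj)
        exact ⟨by omega, h1.2⟩
  · -- surjectivity
    intro y hy
    rcases cs.length_mul_simple y.1 a with hc | hc
    · exact ⟨y, (Mup y hy (by omega)).1, (Mup y hy (by omega)).2⟩
    · exact ⟨_, (Mxp y hy hc).1, (Mxp y hy hc).2⟩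
  · -- fibers
    intro y hy
    obtain ⟨hy1, hy2, hy3, hy4⟩ := (hmem (p+1) y).mp hy
    have hpy2 : p ∉ y.2 := fun h => by have := (hy2 p h).1; omega
    refine ⟨?_, ?_, ?_⟩
    · intro hc x
      constructor
      · rintro ⟨hx, hxy⟩
        rcases FA y hy x hx hxy with h | ⟨h1, h2⟩
        · exact h
        · exfalso; omega
      · rintro rfl
        exact Mup _ hy hc
    · intro hc hnb x
      have hc' : cs.length (y.1 * cs.simple a) + 1 = cs.length y.1 := by
        rcases cs.length_mul_simple y.1 a with h | h <;> omega
      constructor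
      · rintro ⟨hx, hxy⟩
        rcases FA y hy x hx hxy with h | ⟨h1, h2⟩
        · exfalso
          apply hnb
          rw [hDemQ1]
          subst h
          obtain ⟨hm1, _, _, _⟩ := (hmem p x).mp hx
          rw [hDem0] at hm1
          exact hm1
        · exact h1
      · rintro rfl
        exact Mxp _ hy hc'
    · intro hc hb x
      have hc' : cs.length (y.1 * cs.simple a) + 1 = cs.length y.1 := by
        rcases cs.length_mul_simple y.1 a with h | h <;> omega
      constructor
      · rintro ⟨hx, hxy⟩
        rcases FA y hy x hx hxy with h | ⟨h1, _⟩
        · exact Or.inl h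
        · exact Or.inr h1
      · rintro (rfl | rfl)
        · refine ⟨(hmem p _).mpr ⟨?_, ?_, hy3, hy4⟩, ?_⟩
          · rw [hDem0, ← hDemQ1]; exact hb
          · intro j hj
            have := hy2 j hj
            exact ⟨by omega, this.2⟩
          · rw [hφdef, if_neg hpy2]
        · exact Mxp _ hy hc'
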